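/- Let r ≥ 3 and n ≥ 16r, and let G be an r-partite graph on (V_1,...,V_r) with parts of size n and minimum cross-degree at least (1 − 1/(16r))n. Fix distinct parts indexed i, j, distinct vertices v, v' ∈ V_i and distinct vertices u_1, u_2 ∈ V_j with all four edges v u_1, v u_2, v' u_1, v' u_2 present in G. Then there is a zero-sum function ψ on the r-cliques of G such that for each edge e, the total ψ-weight on e is 1 if e ∈ {v u_1, v' u_2}, is −1 if e ∈ {v u_2, v' u_1}, and is 0 otherwise; moreover |ψ(K)| ≤ 2n²/k for every r-clique K, where k is the number of r-cliques of G. -/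

import Mathlib

open Finset
open scoped Classical

set_option linter.unusedSectionVars false
set_option linter.unusedVariables false

namespace S4
variable {V : Type*} [Fintype V] [DecidableEq V] {r n : ℕ}

variable {V : Type*} [Fintype V] [DecidableEq V] {r : ℕ}

noncomputable def F (G : SimpleGraph V) (P : V → Fin r) (X : Finset V) (L : Finset (Fin r)) :
    Finset (Finset V) :=
  univ.filter fun S => G.IsClique ↑S ∧ S.image P = L ∧ S.card = L.card ∧
    ∀ x ∈ X, ∀ a ∈ S, G.Adj x a

lemma mem_F {G : SimpleGraph V} {P : V → Fin r} {X : Finset V} {L : Finset (Fin r)}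
    {S : Finset V} : S ∈ F G P X L ↔ G.IsClique ↑S ∧ S.image P = L ∧ S.card = L.card ∧
      ∀ x ∈ X, ∀ a ∈ S, G.Adj x a := by
  simp [F]

lemma injOn_of_mem_F {G : SimpleGraph V} {P : V → Fin r} {X : Finset V} {L : Finset (Fin r)}
    {S : Finset V} (h : S ∈ F G P X L) : Set.InjOn P ↑S := by
  rw [mem_F] at h
  rw [← Finset.card_image_iff, h.2.1, h.2.2.1]

noncomputable def ext (G : SimpleGraph V) (P : V → Fin r) (X : Finset V) (S : Finset V)
    (ℓ : Fin r) : Finset V :=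
  univ.filter fun w => P w = ℓ ∧ (∀ a ∈ S, G.Adj w a) ∧ ∀ x ∈ X, G.Adj x w

lemma F_insert_eq (G : SimpleGraph V) (P : V → Fin r) (X : Finset V) {L : Finset (Fin r)}
    {ℓ : Fin r} (hℓ : ℓ ∉ L) :
    F G P X (insert ℓ L) = (F G P X L).biUnion
      (fun S => (ext G P X S ℓ).image (fun w => insert w S)) := by
  ext K
  simp only [Finset.mem_biUnion, Finset.mem_image]
  constructor
  · intro hK
    have hK' := hK
    rw [mem_F] at hK'
    obtain ⟨hcl, him, hcard, hX⟩ := hK'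
    have hinj : Set.InjOn P ↑K := injOn_of_mem_F hK
    have hℓmem : ℓ ∈ K.image P := by rw [him]; exact Finset.mem_insert_self _ _
    obtain ⟨w, hwK, hw⟩ := Finset.mem_image.1 hℓmem
    refine ⟨K.erase w, ?_, w, ?_, ?_⟩
    · rw [mem_F]
      have himage : (K.erase w).image P = L := by
        apply Finset.eq_of_subset_of_card_le
        · intro b hb
          obtain ⟨a, ha, hab⟩ := Finset.mem_image.1 hb
          have haK := Finset.mem_of_mem_erase ha
          have : b ∈ insert ℓ L := by
            rw [← him, ← hab]; exact Finset.mem_image_of_mem P haK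
          rcases Finset.mem_insert.1 this with h | h
          · exfalso
            exact (Finset.ne_of_mem_erase ha) (hinj haK hwK (by rw [hab, h, hw]))
          · exact h
        · have : ((K.erase w).image P).card = (K.erase w).card :=
            Finset.card_image_iff.2 (hinj.mono (by simp [Finset.erase_subset]))
          rw [this, Finset.card_erase_of_mem hwK, hcard, Finset.card_insert_of_notMem hℓ]
          omega
      refine ⟨hcl.subset (by simp [Finset.erase_subset]), himage, ?_, ?_⟩
      · rw [Finset.card_erase_of_mem hwK, hcard, Finset.card_insert_of_notMem hℓ]
        omega
      · exact fun x hx a ha => hX x hx a (Finset.mem_of_mem_erase ha)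
    · simp only [ext, Finset.mem_filter, Finset.mem_univ, true_and]
      refine ⟨hw, fun a ha => ?_, fun x hx => hX x hx w hwK⟩
      exact hcl hwK (Finset.mem_of_mem_erase ha) (Finset.ne_of_mem_erase ha).symm
    · exact Finset.insert_erase hwK
  · rintro ⟨S, hS, w, hw, rfl⟩
    rw [mem_F] at hS ⊢
    obtain ⟨hcl, him, hcard, hX⟩ := hS
    simp only [ext, Finset.mem_filter, Finset.mem_univ, true_and] at hw
    obtain ⟨hwℓ, hadj, hXw⟩ := hw
    have hwS : w ∉ S := fun h => hℓ (him ▸ (hwℓ ▸ Finset.mem_image_of_mem P h))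
    refine ⟨?_, ?_, ?_, ?_⟩
    · rw [Finset.coe_insert]
      exact hcl.insert fun a ha _ => (hadj a ha)
    · rw [Finset.image_insert, hwℓ, him]
    · rw [Finset.card_insert_of_notMem hwS, hcard, Finset.card_insert_of_notMem hℓ]
    · intro x hx a ha
      rcases Finset.mem_insert.1 ha with rfl | ha
      · exact hXw x hx
      · exact hX x hx a ha

lemma F_insert_card (G : SimpleGraph V) (P : V → Fin r) (X : Finset V) {L : Finset (Fin r)}
    {ℓ : Fin r} (hℓ : ℓ ∉ L) :
    (F G P X (insert ℓ L)).card = ∑ S ∈ F G P X L, (ext G P X S ℓ).card := by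
  rw [F_insert_eq G P X hℓ]
  rw [Finset.card_biUnion]
  · refine Finset.sum_congr rfl fun S hS => ?_
    apply Finset.card_image_of_injOn
    intro w hw w' hw' hww'
    simp only [ext, Finset.mem_filter, Finset.mem_univ, true_and, Finset.mem_coe] at hw hw'
    have hwS : w ∉ S := fun h => (G.loopless.irrefl w (hw.2.1 w h)).elim
    have hww2 : insert w S = insert w' S := hww'
    have : w ∈ insert w' S := by rw [← hww2]; exact Finset.mem_insert_self w S
    rcases Finset.mem_insert.1 this with h | h
    · exact h
    · exact absurd h hwS
  · intro S hS S' hS' hne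
    simp only [Finset.disjoint_left, Finset.mem_image]
    rintro K ⟨w, hw, rfl⟩ ⟨w', hw', heq⟩
    simp only [ext, Finset.mem_filter] at hw hw'
    apply hne
    have key : ∀ (T : Finset V) (u : V), T ∈ F G P X L → P u = ℓ →
        (insert u T).filter (fun z => P z ≠ ℓ) = T := by
      intro T u hT hu
      ext z
      simp only [Finset.mem_filter, Finset.mem_insert]
      constructor
      · rintro ⟨rfl | hz, hne'⟩
        · exact absurd hu hne'
        · exact hz
      · intro hz
        rw [mem_F] at hT
        refine ⟨Or.inr hz, fun h => hℓ ?_⟩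
        rw [← hT.2.1]
        exact h ▸ Finset.mem_image_of_mem P hz
    rw [← key S w hS hw.2.1, ← key S' w' hS' hw'.2.1, heq]


noncomputable def nonN (G : SimpleGraph V) (P : V → Fin r) (x : V) (ℓ : Fin r) : Finset V :=
  univ.filter fun z => P z = ℓ ∧ ¬ G.Adj x z

lemma nonN_card {G : SimpleGraph V} {P : V → Fin r}
    (hsize : ∀ i : Fin r, (Finset.univ.filter fun z => P z = i).card = n)
    (hdeg : ∀ (ℓ : Fin r) (x : V), P x ≠ ℓ →
      (1 - 1 / (16 * (r : ℝ))) * n ≤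
        ((Finset.univ.filter fun y => P y = ℓ ∧ G.Adj x y).card : ℝ))
    {x : V} {ℓ : Fin r} (hx : P x ≠ ℓ) :
    ((nonN G P x ℓ).card : ℝ) ≤ n / (16 * r) := by
  have hsplit : (univ.filter fun z => P z = ℓ) =
      (univ.filter fun z => P z = ℓ ∧ G.Adj x z) ∪ nonN G P x ℓ := by
    ext z; simp only [nonN, Finset.mem_filter, Finset.mem_union, Finset.mem_univ, true_and]
    tauto
  have hdisj : Disjoint (univ.filter fun z => P z = ℓ ∧ G.Adj x z) (nonN G P x ℓ) := by
    simp only [Finset.disjoint_left, nonN, Finset.mem_filter, Finset.mem_univ, true_and]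
    tauto
  have hcard : n = (univ.filter fun z => P z = ℓ ∧ G.Adj x z).card + (nonN G P x ℓ).card := by
    rw [← hsize ℓ, hsplit, Finset.card_union_of_disjoint hdisj]
  have := hdeg ℓ x hx
  have h2 : ((nonN G P x ℓ).card : ℝ) = n - (univ.filter fun z => P z = ℓ ∧ G.Adj x z).card := by
    rw [hcard]; push_cast; ring
  rw [h2]
  have e : (n:ℝ) - (1 - 1/(16*(r:ℝ)))*n = n/(16*r) := by ring
  linarith [this, e]

lemma ext_lower {G : SimpleGraph V} {P : V → Fin r}
    (hsize : ∀ i : Fin r, (Finset.univ.filter fun z => P z = i).card = n)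
    (hdeg : ∀ (ℓ : Fin r) (x : V), P x ≠ ℓ →
      (1 - 1 / (16 * (r : ℝ))) * n ≤
        ((Finset.univ.filter fun y => P y = ℓ ∧ G.Adj x y).card : ℝ))
    {X S : Finset V} {L : Finset (Fin r)} {ℓ : Fin r}
    (hS : S ∈ F G P X L) (hℓ : ℓ ∉ L) (hX : ∀ x ∈ X, P x ≠ ℓ ∧ P x ∉ L) :
    (n : ℝ) - (X.card + L.card) * (n / (16 * r)) ≤ ((ext G P X S ℓ).card : ℝ) := by
  rw [mem_F] at hS
  obtain ⟨hcl, him, hcard, hadj⟩ := hS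
  have hPS : ∀ a ∈ S, P a ∈ L := fun a ha => him ▸ Finset.mem_image_of_mem P ha
  have hdisjXS : Disjoint X S := by
    rw [Finset.disjoint_left]
    intro x hx hxS
    exact (hX x hx).2 (hPS x hxS)
  have hsub : (univ.filter fun z => P z = ℓ) \ ext G P X S ℓ ⊆
      (X ∪ S).biUnion (fun z => nonN G P z ℓ) := by
    intro z hz
    simp only [Finset.mem_sdiff, Finset.mem_filter, Finset.mem_univ, true_and, ext] at hz
    obtain ⟨hzℓ, hzn⟩ := hz
    rw [Finset.mem_biUnion]
    push_neg at hzn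
    by_cases hall : ∀ a ∈ S, G.Adj z a
    · obtain ⟨x, hx, hnx⟩ := hzn hzℓ hall
      exact ⟨x, Finset.mem_union_left S hx, by
        simp only [nonN, Finset.mem_filter, Finset.mem_univ, true_and]
        exact ⟨hzℓ, hnx⟩⟩
    · push_neg at hall
      obtain ⟨a, ha, hna⟩ := hall
      exact ⟨a, Finset.mem_union_right X ha, by
        simp only [nonN, Finset.mem_filter, Finset.mem_univ, true_and]
        exact ⟨hzℓ, fun h => hna h.symm⟩⟩
  have hext_sub : ext G P X S ℓ ⊆ univ.filter fun z => P z = ℓ := by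
    intro w hw
    simp only [ext, Finset.mem_filter, Finset.mem_univ, true_and] at hw ⊢
    exact hw.1
  have hn1 : ((univ.filter fun z => P z = ℓ) \ ext G P X S ℓ).card + (ext G P X S ℓ).card = n := by
    rw [Finset.card_sdiff_add_card_eq_card hext_sub, hsize ℓ]
  have hn2 : ((univ.filter fun z => P z = ℓ) \ ext G P X S ℓ).card ≤
      ∑ z ∈ X ∪ S, (nonN G P z ℓ).card :=
    le_trans (Finset.card_le_card hsub) (Finset.card_biUnion_le)
  have hsum : (∑ z ∈ X ∪ S, ((nonN G P z ℓ).card : ℝ)) ≤ (X.card + L.card) * (n / (16 * r)) := by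
    rw [Finset.sum_union hdisjXS]
    have h1 : (∑ z ∈ X, ((nonN G P z ℓ).card : ℝ)) ≤ X.card * (n / (16 * r)) := by
      calc (∑ z ∈ X, ((nonN G P z ℓ).card : ℝ)) ≤ ∑ _z ∈ X, (n / (16 * (r:ℝ))) :=
            Finset.sum_le_sum fun z hz => nonN_card hsize hdeg (hX z hz).1
        _ = X.card * (n / (16 * r)) := by rw [Finset.sum_const]; simp [nsmul_eq_mul]
    have h2 : (∑ z ∈ S, ((nonN G P z ℓ).card : ℝ)) ≤ L.card * (n / (16 * r)) := by
      calc (∑ z ∈ S, ((nonN G P z ℓ).card : ℝ)) ≤ ∑ _z ∈ S, (n / (16 * (r:ℝ))) :=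
            Finset.sum_le_sum fun z hz => nonN_card hsize hdeg
              (fun h => hℓ (h ▸ hPS z hz))
        _ = L.card * (n / (16 * r)) := by rw [Finset.sum_const, hcard]; simp [nsmul_eq_mul]
    linarith
  have hc : (n : ℝ) ≤ (∑ z ∈ X ∪ S, ((nonN G P z ℓ).card : ℝ)) + (ext G P X S ℓ).card := by
    have : (n : ℕ) ≤ (∑ z ∈ X ∪ S, (nonN G P z ℓ).card) + (ext G P X S ℓ).card := by omega
    exact_mod_cast this
  linarith

lemma F_lower {G : SimpleGraph V} {P : V → Fin r}
    (hsize : ∀ i : Fin r, (Finset.univ.filter fun z => P z = i).card = n)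
    (hdeg : ∀ (ℓ : Fin r) (x : V), P x ≠ ℓ →
      (1 - 1 / (16 * (r : ℝ))) * n ≤
        ((Finset.univ.filter fun y => P y = ℓ ∧ G.Adj x y).card : ℝ))
    {X : Finset V} {L : Finset (Fin r)} {ℓ : Fin r}
    (hℓ : ℓ ∉ L) (hX : ∀ x ∈ X, P x ≠ ℓ ∧ P x ∉ L) :
    ((n : ℝ) - (X.card + L.card) * (n / (16 * r))) * (F G P X L).card ≤
      ((F G P X (insert ℓ L)).card : ℝ) := by
  have h := F_insert_card G P X hℓ
  have : ((F G P X (insert ℓ L)).card : ℝ) = ∑ S ∈ F G P X L, ((ext G P X S ℓ).card : ℝ) := by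
    rw [h]; push_cast; rfl
  rw [this]
  calc ((n : ℝ) - (X.card + L.card) * (n / (16 * r))) * (F G P X L).card
      = ∑ _S ∈ F G P X L, ((n : ℝ) - (X.card + L.card) * (n / (16 * r))) := by
        rw [Finset.sum_const]; simp [nsmul_eq_mul]; ring
    _ ≤ ∑ S ∈ F G P X L, ((ext G P X S ℓ).card : ℝ) :=
        Finset.sum_le_sum fun S hS => ext_lower hsize hdeg hS hℓ hX

lemma F_upper {G : SimpleGraph V} {P : V → Fin r}
    (hsize : ∀ i : Fin r, (Finset.univ.filter fun z => P z = i).card = n)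
    {X : Finset V} {L : Finset (Fin r)} {ℓ : Fin r} (hℓ : ℓ ∉ L) :
    (F G P X (insert ℓ L)).card ≤ n * (F G P X L).card := by
  rw [F_insert_card G P X hℓ]
  calc ∑ S ∈ F G P X L, (ext G P X S ℓ).card ≤ ∑ _S ∈ F G P X L, n :=
        Finset.sum_le_sum fun S _ => by
          rw [← hsize ℓ]
          exact Finset.card_le_card fun w hw => by
            simp only [ext, Finset.mem_filter, Finset.mem_univ, true_and] at hw ⊢
            exact hw.1
    _ = (F G P X L).card * n := by rw [Finset.sum_const, smul_eq_mul]
    _ = n * (F G P X L).card := mul_comm _ _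

lemma F_empty (G : SimpleGraph V) (P : V → Fin r) (X : Finset V) :
    F G P X (∅ : Finset (Fin r)) = {∅} := by
  ext S
  simp only [mem_F, Finset.mem_singleton, Finset.card_empty, Finset.card_eq_zero,
    Finset.image_eq_empty]
  constructor
  · rintro ⟨-, h, -, -⟩; exact h
  · rintro rfl
    simp [SimpleGraph.IsClique]

lemma F_mono (G : SimpleGraph V) (P : V → Fin r) {X Y : Finset V} (hXY : Y ⊆ X)
    (L : Finset (Fin r)) : F G P X L ⊆ F G P Y L := by
  intro S hS
  rw [mem_F] at hS ⊢
  exact ⟨hS.1, hS.2.1, hS.2.2.1, fun x hx => hS.2.2.2 x (hXY hx)⟩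

lemma card_le_r (L : Finset (Fin r)) : (L.card : ℝ) ≤ r := by
  have := Finset.card_le_univ L
  rw [Fintype.card_fin] at this
  exact_mod_cast this

lemma factor_pos {G : SimpleGraph V} {P : V → Fin r} (hr : 3 ≤ r) (hn : 16 * r ≤ n)
    (L : Finset (Fin r)) :
    (0 : ℝ) < (n : ℝ) - ((0 : ℕ) + L.card) * (n / (16 * r)) := by
  have hrpos : (0 : ℝ) < r := by positivity
  have hnpos : (0 : ℝ) < n := by
    have : 0 < n := by omega
    exact_mod_cast this
  have h1 : ((0 : ℕ) + L.card : ℝ) * (n / (16 * r)) ≤ r * (n / (16 * r)) := by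
    apply mul_le_mul_of_nonneg_right _ (by positivity)
    push_cast
    simpa using card_le_r L
  have h2 : (r : ℝ) * (n / (16 * r)) = n / 16 := by field_simp
  nlinarith
lemma F_pos {G : SimpleGraph V} {P : V → Fin r} (hr : 3 ≤ r) (hn : 16 * r ≤ n)
    (hsize : ∀ i : Fin r, (Finset.univ.filter fun z => P z = i).card = n)
    (hdeg : ∀ (ℓ : Fin r) (x : V), P x ≠ ℓ →
      (1 - 1 / (16 * (r : ℝ))) * n ≤
        ((Finset.univ.filter fun y => P y = ℓ ∧ G.Adj x y).card : ℝ))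
    (L : Finset (Fin r)) : (0 : ℝ) < ((F G P ∅ L).card : ℝ) := by
  induction L using Finset.induction_on with
  | empty => rw [F_empty]; norm_num
  | insert _ _ hℓ =>
    rename_i ℓ L ih
    have h := F_lower hsize hdeg (X := ∅) hℓ (by simp)
    simp only [Finset.card_empty] at h
    have := factor_pos (G := G) (P := P) hr hn L
    calc (0:ℝ) < ((n : ℝ) - ((0:ℕ) + L.card) * (n / (16 * r))) * (F G P ∅ L).card :=
          mul_pos this ih
      _ ≤ _ := h
-- (3) erase injection
lemma filter_mem_card_le {G : SimpleGraph V} {P : V → Fin r} {L : Finset (Fin r)}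
    {ℓ : Fin r} (hℓ : ℓ ∈ L) {w : V} (hw : P w = ℓ) :
    ((F G P ∅ L).filter (fun S => w ∈ S)).card ≤ (F G P ∅ (L.erase ℓ)).card := by
  apply Finset.card_le_card_of_injOn (fun S => S.erase w)
  · intro S hS
    simp only [Finset.mem_coe, Finset.mem_filter] at hS
    obtain ⟨hSF, hwS⟩ := hS
    have hinj := injOn_of_mem_F hSF
    show S.erase w ∈ F G P ∅ (L.erase ℓ)
    rw [mem_F] at hSF ⊢
    obtain ⟨hcl, him, hcard, -⟩ := hSF
    have himage : (S.erase w).image P = L.erase ℓ := by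
      apply Finset.eq_of_subset_of_card_le
      · intro b hb
        obtain ⟨a, ha, hab⟩ := Finset.mem_image.1 hb
        have haS := Finset.mem_of_mem_erase ha
        rw [Finset.mem_erase]
        constructor
        · intro hbℓ
          exact (Finset.ne_of_mem_erase ha) (hinj haS hwS (by rw [hab, hbℓ, hw]))
        · rw [← him, ← hab]; exact Finset.mem_image_of_mem P haS
      · have h1 : ((S.erase w).image P).card = (S.erase w).card :=
          Finset.card_image_iff.2 (hinj.mono (by simp [Finset.erase_subset]))
        rw [h1, Finset.card_erase_of_mem hwS, Finset.card_erase_of_mem hℓ, hcard]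
    refine ⟨hcl.subset (by simp [Finset.erase_subset]), himage, ?_, by simp⟩
    rw [Finset.card_erase_of_mem hwS, Finset.card_erase_of_mem hℓ, hcard]
  · intro S hS S' hS' h
    simp only [Finset.mem_coe, Finset.mem_filter] at hS hS'
    have h' : S.erase w = S'.erase w := h
    rw [← Finset.insert_erase hS.2, ← Finset.insert_erase hS'.2, h']

-- bad count
lemma bad_count {G : SimpleGraph V} {P : V → Fin r}
    (hsize : ∀ i : Fin r, (Finset.univ.filter fun z => P z = i).card = n)
    (hdeg : ∀ (ℓ : Fin r) (x : V), P x ≠ ℓ →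
      (1 - 1 / (16 * (r : ℝ))) * n ≤
        ((Finset.univ.filter fun y => P y = ℓ ∧ G.Adj x y).card : ℝ))
    {X : Finset V} {L : Finset (Fin r)} (hX : ∀ x ∈ X, P x ∉ L) :
    ((F G P ∅ L).card : ℝ) - ((F G P X L).card : ℝ) ≤
      ∑ ℓ ∈ L, (X.card : ℝ) * (n / (16 * r)) * ((F G P ∅ (L.erase ℓ)).card : ℝ) := by
  classical
  set Bad : Fin r → V → Finset (Finset V) :=
    fun ℓ x => (F G P ∅ L).filter (fun S => ∃ w ∈ S, P w = ℓ ∧ ¬ G.Adj x w) with hBad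
  have hsub : F G P ∅ L \ F G P X L ⊆ (L ×ˢ X).biUnion (fun p => Bad p.1 p.2) := by
    intro S hS
    rw [Finset.mem_sdiff] at hS
    obtain ⟨hS0, hSX⟩ := hS
    have hS0' := hS0
    rw [mem_F] at hS0'
    obtain ⟨hcl, him, hcard, -⟩ := hS0'
    have : ∃ x ∈ X, ∃ a ∈ S, ¬ G.Adj x a := by
      by_contra hcon
      push_neg at hcon
      exact hSX (mem_F.2 ⟨hcl, him, hcard, hcon⟩)
    obtain ⟨x, hx, a, ha, hna⟩ := this
    rw [Finset.mem_biUnion]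
    refine ⟨(P a, x), ?_, ?_⟩
    · rw [Finset.mem_product]
      exact ⟨him ▸ Finset.mem_image_of_mem P ha, hx⟩
    · rw [hBad]
      simp only [Finset.mem_filter]
      exact ⟨hS0, a, ha, rfl, hna⟩
  have hBadcard : ∀ ℓ ∈ L, ∀ x ∈ X, ((Bad ℓ x).card : ℝ) ≤
      (n / (16 * r)) * ((F G P ∅ (L.erase ℓ)).card : ℝ) := by
    intro ℓ hℓ x hx
    have h1 : Bad ℓ x ⊆ (nonN G P x ℓ).biUnion
        (fun w => (F G P ∅ L).filter (fun S => w ∈ S)) := by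
      intro S hS
      rw [hBad, Finset.mem_filter] at hS
      obtain ⟨hSF, w, hwS, hwℓ, hnadj⟩ := hS
      rw [Finset.mem_biUnion]
      refine ⟨w, ?_, Finset.mem_filter.2 ⟨hSF, hwS⟩⟩
      simp only [nonN, Finset.mem_filter, Finset.mem_univ, true_and]
      exact ⟨hwℓ, hnadj⟩
    have h2 : (Bad ℓ x).card ≤ (nonN G P x ℓ).card * (F G P ∅ (L.erase ℓ)).card := by
      calc (Bad ℓ x).card ≤ ∑ w ∈ nonN G P x ℓ, ((F G P ∅ L).filter (fun S => w ∈ S)).card :=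
            le_trans (Finset.card_le_card h1) Finset.card_biUnion_le
        _ ≤ ∑ _w ∈ nonN G P x ℓ, (F G P ∅ (L.erase ℓ)).card := by
            apply Finset.sum_le_sum
            intro w hw
            simp only [nonN, Finset.mem_filter, Finset.mem_univ, true_and] at hw
            exact filter_mem_card_le hℓ hw.1
        _ = (nonN G P x ℓ).card * (F G P ∅ (L.erase ℓ)).card := by
            rw [Finset.sum_const, smul_eq_mul]
    have h3 : ((nonN G P x ℓ).card : ℝ) ≤ n / (16 * r) :=
      nonN_card hsize hdeg (fun h => hX x hx (h ▸ hℓ))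
    calc ((Bad ℓ x).card : ℝ) ≤ ((nonN G P x ℓ).card : ℝ) * (F G P ∅ (L.erase ℓ)).card := by
          exact_mod_cast h2
      _ ≤ (n / (16 * r)) * ((F G P ∅ (L.erase ℓ)).card : ℝ) := by
          apply mul_le_mul_of_nonneg_right h3 (by positivity)
  have hMsubT : F G P X L ⊆ F G P ∅ L := by
    intro S hS
    rw [mem_F] at hS ⊢
    exact ⟨hS.1, hS.2.1, hS.2.2.1, by simp⟩
  have hdiff : (F G P ∅ L).card - (F G P X L).card = (F G P ∅ L \ F G P X L).card :=
    (Finset.card_sdiff_of_subset hMsubT).symm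
  have hdiff2 : ((F G P ∅ L \ F G P X L).card : ℝ) ≤
      ∑ ℓ ∈ L, (X.card : ℝ) * (n / (16 * r)) * ((F G P ∅ (L.erase ℓ)).card : ℝ) := by
    calc ((F G P ∅ L \ F G P X L).card : ℝ)
        ≤ ((((L ×ˢ X).biUnion (fun p => Bad p.1 p.2)).card : ℕ) : ℝ) := by
          exact_mod_cast Finset.card_le_card hsub
      _ ≤ ((∑ p ∈ L ×ˢ X, (Bad p.1 p.2).card : ℕ) : ℝ) := by
          exact_mod_cast Finset.card_biUnion_le
      _ = ∑ ℓ ∈ L, ∑ x ∈ X, ((Bad ℓ x).card : ℝ) := by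
          push_cast
          rw [Finset.sum_product]
      _ ≤ ∑ ℓ ∈ L, ∑ _x ∈ X, (n / (16 * r)) * ((F G P ∅ (L.erase ℓ)).card : ℝ) := by
          apply Finset.sum_le_sum
          intro ℓ hℓ
          apply Finset.sum_le_sum
          intro x hx
          exact hBadcard ℓ hℓ x hx
      _ = ∑ ℓ ∈ L, (X.card : ℝ) * (n / (16 * r)) * ((F G P ∅ (L.erase ℓ)).card : ℝ) := by
          apply Finset.sum_congr rfl
          intro ℓ _
          rw [Finset.sum_const, nsmul_eq_mul]
          ring
  have hle : ((F G P ∅ L).card : ℝ) - ((F G P X L).card : ℝ) ≤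
      ((F G P ∅ L \ F G P X L).card : ℝ) := by
    have h4 : (F G P X L).card ≤ (F G P ∅ L).card := Finset.card_le_card hMsubT
    rw [← hdiff, Nat.cast_sub h4]
  linarith
lemma clique_injOn {G : SimpleGraph V} {P : V → Fin r}
    (hpart : ∀ u v, G.Adj u v → P u ≠ P v) {K : Finset V}
    (hK : K ∈ G.cliqueFinset r) : Set.InjOn P ↑K ∧ K.image P = univ := by
  rw [SimpleGraph.mem_cliqueFinset_iff] at hK
  obtain ⟨hcl, hcard⟩ := hK
  have hinj : Set.InjOn P ↑K := by
    intro a ha b hb hab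
    by_contra hne
    exact hpart a b (hcl ha hb hne) hab
  refine ⟨hinj, Finset.eq_univ_of_card _ ?_⟩
  rw [Finset.card_image_iff.2 hinj, hcard, Fintype.card_fin]

lemma clique_card_le {G : SimpleGraph V} {P : V → Fin r}
    (hpart : ∀ u v, G.Adj u v → P u ≠ P v)
    (hsize : ∀ i : Fin r, (Finset.univ.filter fun z => P z = i).card = n)
    {i j : Fin r} (hij : i ≠ j) :
    (G.cliqueFinset r).card ≤
      n * (n * (F G P ∅ ((univ : Finset (Fin r)) \ {i, j})).card) := by
  classical
  set L : Finset (Fin r) := (univ : Finset (Fin r)) \ {i, j} with hL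
  set A : Finset (Finset V) := (univ.filter fun z => P z = i).image (fun a => ({a} : Finset V))
    with hA
  set B : Finset (Finset V) := (univ.filter fun z => P z = j).image (fun a => ({a} : Finset V))
    with hB
  have key : (G.cliqueFinset r).card ≤ (A ×ˢ B ×ˢ F G P ∅ L).card := by
    apply Finset.card_le_card_of_injOn
      (fun K => (K.filter (fun z => P z = i), K.filter (fun z => P z = j),
        K.filter (fun z => P z ≠ i ∧ P z ≠ j)))
    · intro K hK
      simp only [Finset.mem_coe] at hK
      obtain ⟨hinj, himu⟩ := clique_injOn hpart hK
      rw [SimpleGraph.mem_cliqueFinset_iff] at hK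
      obtain ⟨hcl, hcard⟩ := hK
      have huniq : ∀ ℓ : Fin r, ∃ a, P a = ℓ ∧ K.filter (fun z => P z = ℓ) = {a} := by
        intro ℓ
        have : ℓ ∈ K.image P := himu ▸ Finset.mem_univ ℓ
        obtain ⟨a, haK, ha⟩ := Finset.mem_image.1 this
        refine ⟨a, ha, ?_⟩
        ext z
        simp only [Finset.mem_filter, Finset.mem_singleton]
        constructor
        · rintro ⟨hzK, hz⟩
          exact hinj hzK haK (by rw [hz, ha])
        · rintro rfl
          exact ⟨haK, ha⟩
      simp only [Finset.mem_coe]; rw [Finset.mem_product]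
      obtain ⟨a, ha, hfa⟩ := huniq i
      obtain ⟨b, hb, hfb⟩ := huniq j
      refine ⟨?_, ?_⟩
      · rw [hA, hfa]
        exact Finset.mem_image.2 ⟨a, by simp [ha], rfl⟩
      rw [Finset.mem_product]
      refine ⟨?_, ?_⟩
      · rw [hB, hfb]
        exact Finset.mem_image.2 ⟨b, by simp [hb], rfl⟩
      · rw [mem_F]
        have hsubK : (K.filter (fun z => P z ≠ i ∧ P z ≠ j)) ⊆ K := Finset.filter_subset _ _
        have him2 : (K.filter (fun z => P z ≠ i ∧ P z ≠ j)).image P = L := by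
          ext ℓ
          simp only [Finset.mem_image, Finset.mem_filter, hL, Finset.mem_sdiff,
            Finset.mem_univ, true_and, Finset.mem_insert, Finset.mem_singleton]
          constructor
          · rintro ⟨z, ⟨hzK, hzi, hzj⟩, rfl⟩
            push_neg
            exact ⟨hzi, hzj⟩
          · intro hℓ
            push_neg at hℓ
            have : ℓ ∈ K.image P := himu ▸ Finset.mem_univ ℓ
            obtain ⟨z, hzK, hz⟩ := Finset.mem_image.1 this
            exact ⟨z, ⟨hzK, by rw [hz]; exact hℓ.1, by rw [hz]; exact hℓ.2⟩, hz⟩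
        refine ⟨hcl.subset (by exact_mod_cast hsubK), him2, ?_, by simp⟩
        rw [← him2]
        exact (Finset.card_image_iff.2 (hinj.mono (by exact_mod_cast hsubK))).symm
    · intro K hK K' hK' heq
      simp only [Prod.mk.injEq] at heq
      obtain ⟨h1, h2, h3⟩ := heq
      ext z
      constructor
      · intro hz
        by_cases hi : P z = i
        · have : z ∈ K'.filter (fun z => P z = i) := h1 ▸ Finset.mem_filter.2 ⟨hz, hi⟩
          exact (Finset.mem_filter.1 this).1
        · by_cases hj : P z = j
          · have : z ∈ K'.filter (fun z => P z = j) := h2 ▸ Finset.mem_filter.2 ⟨hz, hj⟩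
            exact (Finset.mem_filter.1 this).1
          · have : z ∈ K'.filter (fun z => P z ≠ i ∧ P z ≠ j) :=
              h3 ▸ Finset.mem_filter.2 ⟨hz, hi, hj⟩
            exact (Finset.mem_filter.1 this).1
      · intro hz
        by_cases hi : P z = i
        · have : z ∈ K.filter (fun z => P z = i) := h1 ▸ Finset.mem_filter.2 ⟨hz, hi⟩
          exact (Finset.mem_filter.1 this).1
        · by_cases hj : P z = j
          · have : z ∈ K.filter (fun z => P z = j) := h2 ▸ Finset.mem_filter.2 ⟨hz, hj⟩
            exact (Finset.mem_filter.1 this).1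
          · have : z ∈ K.filter (fun z => P z ≠ i ∧ P z ≠ j) :=
              h3 ▸ Finset.mem_filter.2 ⟨hz, hi, hj⟩
            exact (Finset.mem_filter.1 this).1
  calc (G.cliqueFinset r).card ≤ (A ×ˢ B ×ˢ F G P ∅ L).card := key
    _ = A.card * (B.card * (F G P ∅ L).card) := by
        rw [Finset.card_product, Finset.card_product]
    _ ≤ n * (n * (F G P ∅ L).card) := by
        have hAcard : A.card ≤ n := by
          rw [hA, ← hsize i]
          exact Finset.card_image_le
        have hBcard : B.card ≤ n := by
          rw [hB, ← hsize j]
          exact Finset.card_image_le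
        exact Nat.mul_le_mul hAcard (Nat.mul_le_mul hBcard le_rfl)
lemma L_card {i j : Fin r} (hij : i ≠ j) :
    ((univ : Finset (Fin r)) \ {i, j}).card = r - 2 := by
  rw [Finset.card_sdiff_of_subset (Finset.subset_univ _), Finset.card_univ, Fintype.card_fin,
    Finset.card_pair hij]

lemma not_mem_L_i {i j : Fin r} : i ∉ (univ : Finset (Fin r)) \ {i, j} := by simp
lemma not_mem_L_j {i j : Fin r} : j ∉ (univ : Finset (Fin r)) \ {i, j} := by simp

lemma mem_S_parts {G : SimpleGraph V} {P : V → Fin r} {X : Finset V} {i j : Fin r}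
    {S : Finset V} (hS : S ∈ F G P X ((univ : Finset (Fin r)) \ {i, j})) {z : V} (hz : z ∈ S) :
    P z ≠ i ∧ P z ≠ j := by
  rw [mem_F] at hS
  have : P z ∈ (univ : Finset (Fin r)) \ {i, j} := hS.2.1 ▸ Finset.mem_image_of_mem P hz
  simp only [Finset.mem_sdiff, Finset.mem_insert, Finset.mem_singleton] at this
  push_neg at this
  exact this.2

lemma D_eq {G : SimpleGraph V} {P : V → Fin r} (hr : 3 ≤ r) {i j : Fin r} (hij : i ≠ j)
    {X : Finset V} {a b : V} (ha : P a = i) (hb : P b = j) (haX : a ∈ X) (hbX : b ∈ X)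
    (hab : G.Adj a b) :
    (G.cliqueFinset r).filter
        (fun K => a ∈ K ∧ b ∈ K ∧ (K.erase a).erase b ∈ F G P X ((univ : Finset (Fin r)) \ {i, j}))
      = (F G P X ((univ : Finset (Fin r)) \ {i, j})).image (fun S => insert a (insert b S)) := by
  set L : Finset (Fin r) := (univ : Finset (Fin r)) \ {i, j} with hL
  have hane : a ≠ b := fun h => hij (by rw [← ha, ← hb, h])
  ext K
  simp only [Finset.mem_filter, Finset.mem_image]
  constructor
  · rintro ⟨hKc, haK, hbK, hSM⟩
    refine ⟨(K.erase a).erase b, hSM, ?_⟩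
    rw [Finset.insert_erase (Finset.mem_erase.2 ⟨hane.symm, hbK⟩), Finset.insert_erase haK]
  · rintro ⟨S, hS, rfl⟩
    have hSM := hS
    rw [mem_F] at hS
    obtain ⟨hcl, him, hcard, hadj⟩ := hS
    have haS : a ∉ S := fun h => (mem_S_parts hSM h).1 ha
    have hbS : b ∉ S := fun h => (mem_S_parts hSM h).2 hb
    have habS : a ∉ insert b S := by simp [hane, haS]
    have hcl2 : G.IsClique ↑(insert b S) := by
      rw [Finset.coe_insert]
      exact hcl.insert fun z hz _ => (hadj b hbX z hz)
    have hcl3 : G.IsClique ↑(insert a (insert b S)) := by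
      rw [Finset.coe_insert]
      apply hcl2.insert
      intro z hz hza
      rw [Finset.coe_insert, Set.mem_insert_iff] at hz
      rcases hz with rfl | hz
      · exact hab
      · exact hadj a haX z hz
    have hcard3 : (insert a (insert b S)).card = r := by
      rw [Finset.card_insert_of_notMem habS, Finset.card_insert_of_notMem hbS, hcard,
        hL, L_card hij]
      omega
    refine ⟨SimpleGraph.mem_cliqueFinset_iff.2 ⟨hcl3, hcard3⟩, Finset.mem_insert_self _ _,
      Finset.mem_insert_of_mem (Finset.mem_insert_self _ _), ?_⟩
    rw [Finset.erase_insert habS, Finset.erase_insert hbS]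
    exact hSM

lemma ins_injOn {G : SimpleGraph V} {P : V → Fin r} {i j : Fin r} (hij : i ≠ j)
    {X : Finset V} {a b : V} (ha : P a = i) (hb : P b = j) :
    ∀ S ∈ F G P X ((univ : Finset (Fin r)) \ {i, j}),
      ∀ S' ∈ F G P X ((univ : Finset (Fin r)) \ {i, j}),
      insert a (insert b S) = insert a (insert b S') → S = S' := by
  intro S hS S' hS' h
  have hane : a ≠ b := fun h => hij (by rw [← ha, ← hb, h])
  have haS : a ∉ S := fun hh => (mem_S_parts hS hh).1 ha
  have hbS : b ∉ S := fun hh => (mem_S_parts hS hh).2 hb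
  have haS' : a ∉ S' := fun hh => (mem_S_parts hS' hh).1 ha
  have hbS' : b ∉ S' := fun hh => (mem_S_parts hS' hh).2 hb
  have h1 : (insert a (insert b S)).erase a = (insert a (insert b S')).erase a := by rw [h]
  rw [Finset.erase_insert (by simp [hane, haS]), Finset.erase_insert (by simp [hane, haS'])] at h1
  have h2 : (insert b S).erase b = (insert b S').erase b := by rw [h1]
  rwa [Finset.erase_insert hbS, Finset.erase_insert hbS'] at h2

end S4

/-- the second gadget, with the bound |ψ(K)| ≤ 2n²/k. -/
theorem stmt_4 {V : Type*} [Fintype V] [DecidableEq V] {r n : ℕ} (hr : 3 ≤ r)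
    (hn : 16 * r ≤ n)
    (G : SimpleGraph V) (P : V → Fin r)
    (hpart : ∀ u v, G.Adj u v → P u ≠ P v)
    (hsize : ∀ i : Fin r, (Finset.univ.filter fun v => P v = i).card = n)
    (hdeg : ∀ (ℓ : Fin r) (x : V), P x ≠ ℓ →
      (1 - 1 / (16 * (r : ℝ))) * n ≤
        ((Finset.univ.filter fun y => P y = ℓ ∧ G.Adj x y).card : ℝ))
    (i j : Fin r) (hij : i ≠ j)
    (v v' : V) (hv : P v = i) (hv' : P v' = i) (hvv' : v ≠ v')
    (u₁ u₂ : V) (hu₁ : P u₁ = j) (hu₂ : P u₂ = j) (hu12 : u₁ ≠ u₂)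
    (h1 : G.Adj v u₁) (h2 : G.Adj v u₂) (h3 : G.Adj v' u₁) (h4 : G.Adj v' u₂) :
    ∃ ψ : Finset V → ℝ,
      (∑ K ∈ G.cliqueFinset r, ψ K = 0) ∧
      (∀ e ∈ G.edgeFinset,
        ∑ K ∈ (G.cliqueFinset r).filter (fun K => ∀ x ∈ e, x ∈ K), ψ K =
          (if e = s(v, u₁) ∨ e = s(v', u₂) then (1 : ℝ) else 0)
            - (if e = s(v, u₂) ∨ e = s(v', u₁) then (1 : ℝ) else 0)) ∧
      (∀ K ∈ G.cliqueFinset r,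
        |ψ K| ≤ 2 * (n : ℝ) ^ 2 / ((G.cliqueFinset r).card : ℝ)) := by
  classical
  have hvu1 : v ≠ u₁ := fun h => hij (by rw [← hv, h, hu₁])
  have hvu2 : v ≠ u₂ := fun h => hij (by rw [← hv, h, hu₂])
  have hv'u1 : v' ≠ u₁ := fun h => hij (by rw [← hv', h, hu₁])
  have hv'u2 : v' ≠ u₂ := fun h => hij (by rw [← hv', h, hu₂])
  set X₄ : Finset V := {v, v', u₁, u₂} with hXdef
  set M : Finset (Finset V) := S4.F G P X₄ ((univ : Finset (Fin r)) \ {i, j}) with hMdef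
  set T : Finset (Finset V) := S4.F G P ∅ ((univ : Finset (Fin r)) \ {i, j}) with hTdef
  have hvX : v ∈ X₄ := by simp [hXdef]
  have hv'X : v' ∈ X₄ := by simp [hXdef]
  have hu1X : u₁ ∈ X₄ := by simp [hXdef]
  have hu2X : u₂ ∈ X₄ := by simp [hXdef]
  have hX4card : X₄.card = 4 := by
    rw [hXdef, Finset.card_insert_of_notMem (by simp [hvv', hvu1, hvu2]),
      Finset.card_insert_of_notMem (by simp [hv'u1, hv'u2]),
      Finset.card_insert_of_notMem (by simp [hu12]), Finset.card_singleton]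
  have hX4parts : ∀ x ∈ X₄, P x ∉ ((univ : Finset (Fin r)) \ {i, j}) := by
    intro x hx
    rw [hXdef] at hx
    simp only [Finset.mem_insert, Finset.mem_singleton] at hx
    rcases hx with rfl | rfl | rfl | rfl <;> simp [hv, hv', hu₁, hu₂]
  have hrpos : (0:ℝ) < r := by
    have : 0 < r := by omega
    exact_mod_cast this
  have hnpos : (0:ℝ) < n := by
    have : 0 < n := by omega
    exact_mod_cast this
  have hTpos : (0:ℝ) < (T.card : ℝ) := S4.F_pos hr hn hsize hdeg _
  have hstep3 : ∀ ℓ ∈ ((univ : Finset (Fin r)) \ {i, j}),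
      ((S4.F G P ∅ (((univ : Finset (Fin r)) \ {i, j}).erase ℓ)).card : ℝ)
        ≤ 16 / (15 * n) * T.card := by
    intro ℓ hℓ
    have h := S4.F_lower (G := G) (P := P) (X := ∅)
      (L := ((univ : Finset (Fin r)) \ {i, j}).erase ℓ) (ℓ := ℓ) hsize hdeg
      (Finset.notMem_erase ℓ _) (by simp)
    rw [Finset.insert_erase hℓ] at h
    set Fe : ℝ := ((S4.F G P ∅ (((univ : Finset (Fin r)) \ {i, j}).erase ℓ)).card : ℝ) with hFe
    have hFnn : (0:ℝ) ≤ Fe := by positivity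
    have hfac : (15/16 : ℝ) * n ≤
        (n : ℝ) - (((∅ : Finset V).card : ℝ) + ((((univ : Finset (Fin r)) \ {i, j}).erase ℓ).card : ℝ)) * (n / (16 * r)) := by
      have hc1 : (((((univ : Finset (Fin r)) \ {i, j}).erase ℓ).card : ℝ)) ≤ r := S4.card_le_r _
      have hc2 : (((((univ : Finset (Fin r)) \ {i, j}).erase ℓ).card : ℝ)) * (n / (16 * r)) ≤
          r * (n / (16 * r)) := mul_le_mul_of_nonneg_right hc1 (by positivity)
      have hc3 : (r:ℝ) * (n / (16 * r)) = n / 16 := by field_simp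
      simp only [Finset.card_empty, Nat.cast_zero, zero_add]
      nlinarith
    have h4 : (15/16 : ℝ) * n * Fe ≤ (T.card : ℝ) :=
      le_trans (mul_le_mul_of_nonneg_right hfac hFnn) h
    calc Fe = (16/(15*n)) * ((15/16 : ℝ) * n * Fe) := by field_simp
      _ ≤ (16/(15*n)) * (T.card : ℝ) := by
          apply mul_le_mul_of_nonneg_left h4 (by positivity)
      _ = 16 / (15 * n) * T.card := rfl
  have hbad : (T.card : ℝ) - M.card ≤
      ∑ ℓ ∈ ((univ : Finset (Fin r)) \ {i, j}),
        (X₄.card : ℝ) * (n/(16*r)) *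
          ((S4.F G P ∅ (((univ : Finset (Fin r)) \ {i, j}).erase ℓ)).card : ℝ) :=
    S4.bad_count hsize hdeg hX4parts
  have hMT : (11/15 : ℝ) * T.card ≤ M.card := by
    have hLr : ((((univ : Finset (Fin r)) \ {i, j}).card : ℕ) : ℝ) ≤ r := S4.card_le_r _
    have hsum2 : ∑ ℓ ∈ ((univ : Finset (Fin r)) \ {i, j}),
        (X₄.card : ℝ) * (n/(16*r)) *
          ((S4.F G P ∅ (((univ : Finset (Fin r)) \ {i, j}).erase ℓ)).card : ℝ)
        ≤ (4/15 : ℝ) * T.card := by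
      calc ∑ ℓ ∈ ((univ : Finset (Fin r)) \ {i, j}),
            (X₄.card : ℝ) * (n/(16*r)) *
              ((S4.F G P ∅ (((univ : Finset (Fin r)) \ {i, j}).erase ℓ)).card : ℝ)
          ≤ ∑ _ℓ ∈ ((univ : Finset (Fin r)) \ {i, j}),
              (4 : ℝ) * (n/(16*r)) * (16 / (15 * n) * T.card) := by
            apply Finset.sum_le_sum
            intro ℓ hℓ
            rw [hX4card]
            have := hstep3 ℓ hℓ
            have hnn : (0:ℝ) ≤ (4:ℝ) * (n/(16*r)) := by positivity
            calc ((4:ℕ):ℝ) * (n/(16*r)) *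
                  ((S4.F G P ∅ (((univ : Finset (Fin r)) \ {i, j}).erase ℓ)).card : ℝ)
                = (4:ℝ) * (n/(16*r)) *
                  ((S4.F G P ∅ (((univ : Finset (Fin r)) \ {i, j}).erase ℓ)).card : ℝ) := by
                  norm_num
              _ ≤ (4 : ℝ) * (n/(16*r)) * (16 / (15 * n) * T.card) :=
                  mul_le_mul_of_nonneg_left this hnn
        _ = ((((univ : Finset (Fin r)) \ {i, j}).card : ℕ) : ℝ) *
              ((4 : ℝ) * (n/(16*r)) * (16 / (15 * n) * T.card)) := by
            rw [Finset.sum_const, nsmul_eq_mul]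
        _ ≤ (r : ℝ) * ((4 : ℝ) * (n/(16*r)) * (16 / (15 * n) * T.card)) := by
            apply mul_le_mul_of_nonneg_right hLr
            positivity
        _ = (4/15 : ℝ) * T.card := by field_simp
    linarith
  have hMpos : (0:ℝ) < (M.card : ℝ) := by nlinarith
  have hMne : (M.card : ℝ) ≠ 0 := ne_of_gt hMpos
  have hMnonempty : M.Nonempty := Finset.card_pos.1 (by exact_mod_cast hMpos)
  have hk1 : ((G.cliqueFinset r).card : ℝ) ≤ n * (n * T.card) := by
    exact_mod_cast S4.clique_card_le hpart hsize hij
  have hkpos : (0:ℝ) < ((G.cliqueFinset r).card : ℝ) := by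
    obtain ⟨S₀, hS₀⟩ := hMnonempty
    have hD := S4.D_eq (G := G) (P := P) hr hij (X := X₄) hv hu₁ hvX hu1X h1
    have hmem : insert v (insert u₁ S₀) ∈
        (S4.F G P X₄ ((univ : Finset (Fin r)) \ {i, j})).image
          (fun S => insert v (insert u₁ S)) := by
      apply Finset.mem_image_of_mem
      rw [← hMdef]; exact hS₀
    rw [← hD] at hmem
    have : 0 < (G.cliqueFinset r).card :=
      Finset.card_pos.2 ⟨_, Finset.mem_of_mem_filter _ hmem⟩
    exact_mod_cast this
  have hk2 : ((G.cliqueFinset r).card : ℝ) ≤ 2 * (n:ℝ)^2 * M.card := by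
    nlinarith [hk1, hMT, hTpos, hnpos]
  set c : ℝ := 1 / (M.card : ℝ) with hcdef
  have hcpos : 0 < c := by positivity
  -- the key sum tool
  have hcore : ∀ (a b : V), P a = i → P b = j → a ∈ X₄ → b ∈ X₄ → G.Adj a b →
      ∀ p : Finset V → Prop,
      (((G.cliqueFinset r).filter
          (fun K => (a ∈ K ∧ b ∈ K ∧ (K.erase a).erase b ∈ M) ∧ p K)).card : ℝ)
        = ((M.filter (fun S => p (insert a (insert b S)))).card : ℝ) := by
    intro a b ha hb haX hbX hab p
    have step2 : (G.cliqueFinset r).filter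
          (fun K => (a ∈ K ∧ b ∈ K ∧ (K.erase a).erase b ∈ M) ∧ p K)
        = ((G.cliqueFinset r).filter
            (fun K => a ∈ K ∧ b ∈ K ∧ (K.erase a).erase b ∈ M)).filter p := by
      rw [Finset.filter_filter]
    have hD := S4.D_eq (G := G) (P := P) hr hij (X := X₄) ha hb haX hbX hab
    rw [← hMdef] at hD
    have step3 : ((G.cliqueFinset r).filter
          (fun K => a ∈ K ∧ b ∈ K ∧ (K.erase a).erase b ∈ M)).filter p
        = (M.filter (fun S => p (insert a (insert b S)))).image
            (fun S => insert a (insert b S)) := by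
      rw [hD, Finset.filter_image]
    have hinj := S4.ins_injOn (G := G) (P := P) hij (X := X₄) ha hb
    rw [← hMdef] at hinj
    have step4 : ((M.filter (fun S => p (insert a (insert b S)))).image
          (fun S => insert a (insert b S))).card
        = (M.filter (fun S => p (insert a (insert b S)))).card := by
      apply Finset.card_image_of_injOn
      intro S hS S' hS' hh
      exact hinj S (Finset.mem_of_mem_filter _ hS) S' (Finset.mem_of_mem_filter _ hS') hh
    rw [step2, step3, step4]
  have hsumT : ∀ (a b : V), P a = i → P b = j → a ∈ X₄ → b ∈ X₄ → G.Adj a b →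
      (∑ K ∈ G.cliqueFinset r,
          if a ∈ K ∧ b ∈ K ∧ (K.erase a).erase b ∈ M then (1:ℝ) else 0)
        = (M.card : ℝ) := by
    intro a b ha hb haX hbX hab
    have h := hcore a b ha hb haX hbX hab (fun _ => True)
    simp only [and_true, Finset.filter_true] at h
    rw [Finset.sum_boole]
    rw [show ((G.cliqueFinset r).filter
        (fun K => a ∈ K ∧ b ∈ K ∧ (K.erase a).erase b ∈ M)).card
        = M.card by exact_mod_cast h]
  have hsumXY : ∀ (a b xx yy : V), P a = i → P b = j → a ∈ X₄ → b ∈ X₄ → G.Adj a b →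
      (∑ K ∈ G.cliqueFinset r,
          if (a ∈ K ∧ b ∈ K ∧ (K.erase a).erase b ∈ M) ∧ (xx ∈ K ∧ yy ∈ K) then (1:ℝ) else 0)
        = ((M.filter (fun S => xx ∈ insert a (insert b S) ∧
            yy ∈ insert a (insert b S))).card : ℝ) := by
    intro a b xx yy ha hb haX hbX hab
    rw [Finset.sum_boole]
    have h2 : ((G.cliqueFinset r).filter
          (fun K => (a ∈ K ∧ b ∈ K ∧ (K.erase a).erase b ∈ M) ∧ (xx ∈ K ∧ yy ∈ K)))
        = ((G.cliqueFinset r).filter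
            (fun K => a ∈ K ∧ b ∈ K ∧ (K.erase a).erase b ∈ M)).filter
              (fun K => xx ∈ K ∧ yy ∈ K) := by
      rw [Finset.filter_filter]
    have hD := S4.D_eq (G := G) (P := P) hr hij (X := X₄) ha hb haX hbX hab
    rw [← hMdef] at hD
    have h3 : ((G.cliqueFinset r).filter
          (fun K => a ∈ K ∧ b ∈ K ∧ (K.erase a).erase b ∈ M)).filter
            (fun K => xx ∈ K ∧ yy ∈ K)
        = (M.filter (fun S => xx ∈ insert a (insert b S) ∧
            yy ∈ insert a (insert b S))).image (fun S => insert a (insert b S)) := by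
      rw [hD, Finset.filter_image]
    have hinj := S4.ins_injOn (G := G) (P := P) hij (X := X₄) ha hb
    rw [← hMdef] at hinj
    have h4 : ((M.filter (fun S => xx ∈ insert a (insert b S) ∧
          yy ∈ insert a (insert b S))).image (fun S => insert a (insert b S))).card
        = (M.filter (fun S => xx ∈ insert a (insert b S) ∧
            yy ∈ insert a (insert b S))).card := by
      apply Finset.card_image_of_injOn
      intro S hS S' hS' hh
      exact hinj S (Finset.mem_of_mem_filter _ hS) S' (Finset.mem_of_mem_filter _ hS') hh
    rw [h2, h3, h4]
  -- membership classification
  have hclass_i : ∀ (z a b : V), P z = i → P a = i → P b = j → ∀ S ∈ M,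
      ((z ∈ insert a (insert b S)) ↔ z = a) := by
    intro z a b hz ha hb S hS
    simp only [Finset.mem_insert]
    constructor
    · rintro (rfl | rfl | hzS)
      · rfl
      · exact absurd (hz.symm.trans hb) hij
      · have := S4.mem_S_parts (hMdef ▸ hS) hzS
        exact absurd hz this.1
    · rintro rfl; left; rfl
  have hclass_j : ∀ (z a b : V), P z = j → P a = i → P b = j → ∀ S ∈ M,
      ((z ∈ insert a (insert b S)) ↔ z = b) := by
    intro z a b hz ha hb S hS
    simp only [Finset.mem_insert]
    constructor
    · rintro (rfl | rfl | hzS)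
      · exact absurd (hz.symm.trans ha).symm hij
      · rfl
      · have := S4.mem_S_parts (hMdef ▸ hS) hzS
        exact absurd hz this.2
    · rintro rfl; right; left; rfl
  have hclass_o : ∀ (z a b : V), P z ≠ i → P z ≠ j → P a = i → P b = j → ∀ S ∈ M,
      ((z ∈ insert a (insert b S)) ↔ z ∈ S) := by
    intro z a b hzi hzj ha hb S hS
    simp only [Finset.mem_insert]
    constructor
    · rintro (rfl | rfl | hzS)
      · exact absurd ha hzi
      · exact absurd hb hzj
      · exact hzS
    · intro h; right; right; exact h
  -- Sym2 classification
  have hsym2 : ∀ (x y cc d : V), P cc = i → P d = j → s(x,y) = s(cc,d) →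
      ((P x = i ∧ P y = j ∧ x = cc ∧ y = d) ∨ (P x = j ∧ P y = i ∧ x = d ∧ y = cc)) := by
    intro x y cc d hc hd h
    rw [Sym2.eq_iff] at h
    rcases h with ⟨rfl, rfl⟩ | ⟨rfl, rfl⟩
    · exact Or.inl ⟨hc, hd, rfl, rfl⟩
    · exact Or.inr ⟨hd, hc, rfl, rfl⟩
  refine ⟨fun K => c * ((if v ∈ K ∧ u₁ ∈ K ∧ (K.erase v).erase u₁ ∈ M then (1:ℝ) else 0)
      + (if v' ∈ K ∧ u₂ ∈ K ∧ (K.erase v').erase u₂ ∈ M then (1:ℝ) else 0)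
      - (if v ∈ K ∧ u₂ ∈ K ∧ (K.erase v).erase u₂ ∈ M then (1:ℝ) else 0)
      - (if v' ∈ K ∧ u₁ ∈ K ∧ (K.erase v').erase u₁ ∈ M then (1:ℝ) else 0)), ?_, ?_, ?_⟩
  · -- zero sum
    rw [← Finset.mul_sum]
    simp only [Finset.sum_sub_distrib, Finset.sum_add_distrib]
    rw [hsumT v u₁ hv hu₁ hvX hu1X h1, hsumT v' u₂ hv' hu₂ hv'X hu2X h4,
      hsumT v u₂ hv hu₂ hvX hu2X h2, hsumT v' u₁ hv' hu₁ hv'X hu1X h3]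
    ring
  · -- edge marginals
    intro e he
    induction e using Sym2.ind with
    | _ x y =>
    have hadjxy : G.Adj x y := by rwa [SimpleGraph.mem_edgeFinset, SimpleGraph.mem_edgeSet] at he
    have hPxy : P x ≠ P y := hpart x y hadjxy
    rw [Finset.sum_filter]
    have hconv : ∀ K ∈ G.cliqueFinset r,
        (if (∀ z ∈ s(x,y), z ∈ K) then
          c * ((if v ∈ K ∧ u₁ ∈ K ∧ (K.erase v).erase u₁ ∈ M then (1:ℝ) else 0)
          + (if v' ∈ K ∧ u₂ ∈ K ∧ (K.erase v').erase u₂ ∈ M then (1:ℝ) else 0)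
          - (if v ∈ K ∧ u₂ ∈ K ∧ (K.erase v).erase u₂ ∈ M then (1:ℝ) else 0)
          - (if v' ∈ K ∧ u₁ ∈ K ∧ (K.erase v').erase u₁ ∈ M then (1:ℝ) else 0)) else 0)
        = c * ((if (v ∈ K ∧ u₁ ∈ K ∧ (K.erase v).erase u₁ ∈ M) ∧ (x ∈ K ∧ y ∈ K) then (1:ℝ) else 0)
          + (if (v' ∈ K ∧ u₂ ∈ K ∧ (K.erase v').erase u₂ ∈ M) ∧ (x ∈ K ∧ y ∈ K) then (1:ℝ) else 0)
          - (if (v ∈ K ∧ u₂ ∈ K ∧ (K.erase v).erase u₂ ∈ M) ∧ (x ∈ K ∧ y ∈ K) then (1:ℝ) else 0)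
          - (if (v' ∈ K ∧ u₁ ∈ K ∧ (K.erase v').erase u₁ ∈ M) ∧ (x ∈ K ∧ y ∈ K) then (1:ℝ) else 0)) := by
      intro K _
      by_cases hQ : x ∈ K ∧ y ∈ K
      · have hQ' : (∀ z ∈ s(x,y), z ∈ K) := by
          intro z hz
          rcases Sym2.mem_iff.1 hz with rfl | rfl
          · exact hQ.1
          · exact hQ.2
        rw [if_pos hQ']
        simp only [and_iff_left hQ]
      · have hQ' : ¬(∀ z ∈ s(x,y), z ∈ K) := by
          intro h
          exact hQ ⟨h x (by simp), h y (by simp)⟩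
        rw [if_neg hQ', if_neg (fun h => hQ h.2), if_neg (fun h => hQ h.2),
          if_neg (fun h => hQ h.2), if_neg (fun h => hQ h.2)]
        ring
    rw [Finset.sum_congr rfl hconv, ← Finset.mul_sum]
    simp only [Finset.sum_sub_distrib, Finset.sum_add_distrib]
    rw [hsumXY v u₁ x y hv hu₁ hvX hu1X h1, hsumXY v' u₂ x y hv' hu₂ hv'X hu2X h4,
      hsumXY v u₂ x y hv hu₂ hvX hu2X h2, hsumXY v' u₁ x y hv' hu₁ hv'X hu1X h3]
    have hyne : ∀ {z : V} {w : V}, P z = i → P w = i → z ≠ w → ∀ (q : Prop), (z = w → q) → True := fun _ _ _ _ _ => trivial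
    have hRHS0 : ¬(P x = i ∧ P y = j) → ¬(P x = j ∧ P y = i) →
        ∀ (cc d : V), P cc = i → P d = j → s(x,y) ≠ s(cc,d) := by
      intro hnA hnB cc d hc hd h
      rcases hsym2 x y cc d hc hd h with ⟨ha1,ha2,_⟩ | ⟨hb1,hb2,_⟩
      · exact hnA ⟨ha1, ha2⟩
      · exact hnB ⟨hb1, hb2⟩
    by_cases hxi : P x = i
    · by_cases hyj : P y = j
      · -- Case A : P x = i, P y = j
        have hCe : ∀ (a b : V), P a = i → P b = j →
            (M.filter fun S => x ∈ insert a (insert b S) ∧ y ∈ insert a (insert b S))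
              = if x = a ∧ y = b then M else ∅ := by
          intro a b ha hb
          by_cases hxy2 : x = a ∧ y = b
          · rw [if_pos hxy2]
            apply Finset.filter_true_of_mem
            intro S hS
            rw [hclass_i x a b hxi ha hb S hS, hclass_j y a b hyj ha hb S hS]
            exact hxy2
          · rw [if_neg hxy2]
            apply Finset.filter_false_of_mem
            intro S hS
            rw [hclass_i x a b hxi ha hb S hS, hclass_j y a b hyj ha hb S hS]
            exact hxy2
        rw [hCe v u₁ hv hu₁, hCe v' u₂ hv' hu₂, hCe v u₂ hv hu₂, hCe v' u₁ hv' hu₁]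
        have hs1 : (s(x,y) = s(v,u₁)) ↔ (x = v ∧ y = u₁) := by
          constructor
          · intro h
            rcases hsym2 x y v u₁ hv hu₁ h with ⟨_,_,h3,h4⟩ | ⟨hxx,_,_,_⟩
            · exact ⟨h3,h4⟩
            · exact absurd (hxi.symm.trans hxx) hij
          · rintro ⟨rfl, rfl⟩; rfl
        have hs2 : (s(x,y) = s(v',u₂)) ↔ (x = v' ∧ y = u₂) := by
          constructor
          · intro h
            rcases hsym2 x y v' u₂ hv' hu₂ h with ⟨_,_,h3,h4⟩ | ⟨hxx,_,_,_⟩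
            · exact ⟨h3,h4⟩
            · exact absurd (hxi.symm.trans hxx) hij
          · rintro ⟨rfl, rfl⟩; rfl
        have hs3 : (s(x,y) = s(v,u₂)) ↔ (x = v ∧ y = u₂) := by
          constructor
          · intro h
            rcases hsym2 x y v u₂ hv hu₂ h with ⟨_,_,h3,h4⟩ | ⟨hxx,_,_,_⟩
            · exact ⟨h3,h4⟩
            · exact absurd (hxi.symm.trans hxx) hij
          · rintro ⟨rfl, rfl⟩; rfl
        have hs4 : (s(x,y) = s(v',u₁)) ↔ (x = v' ∧ y = u₁) := by
          constructor
          · intro h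
            rcases hsym2 x y v' u₁ hv' hu₁ h with ⟨_,_,h3,h4⟩ | ⟨hxx,_,_,_⟩
            · exact ⟨h3,h4⟩
            · exact absurd (hxi.symm.trans hxx) hij
          · rintro ⟨rfl, rfl⟩; rfl
        simp only [hs1, hs2, hs3, hs4]
        by_cases hA : x = v ∧ y = u₁
        · have hB : ¬(x = v' ∧ y = u₂) := fun h => hvv' (hA.1.symm.trans h.1)
          have hC : ¬(x = v ∧ y = u₂) := fun h => hu12 (hA.2.symm.trans h.2)
          have hD : ¬(x = v' ∧ y = u₁) := fun h => hvv' (hA.1.symm.trans h.1)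
          rw [if_pos hA, if_neg hB, if_neg hC, if_neg hD,
            if_pos (Or.inl hA), if_neg (fun h => h.elim hC hD)]
          simp only [Finset.card_empty, Nat.cast_zero]
          rw [hcdef]
          field_simp; ring
        · by_cases hB : x = v' ∧ y = u₂
          · have hC : ¬(x = v ∧ y = u₂) := fun h => hvv' (h.1.symm.trans hB.1)
            have hD : ¬(x = v' ∧ y = u₁) := fun h => hu12 (h.2.symm.trans hB.2)
            rw [if_neg hA, if_pos hB, if_neg hC, if_neg hD,
              if_pos (Or.inr hB), if_neg (fun h => h.elim hC hD)]
            simp only [Finset.card_empty, Nat.cast_zero]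
            rw [hcdef]
            field_simp; ring
          · by_cases hC : x = v ∧ y = u₂
            · have hD : ¬(x = v' ∧ y = u₁) := fun h => hvv' (hC.1.symm.trans h.1)
              rw [if_neg hA, if_neg hB, if_pos hC, if_neg hD,
                if_neg (fun h => h.elim hA hB), if_pos (Or.inl hC)]
              simp only [Finset.card_empty, Nat.cast_zero]
              rw [hcdef]
              field_simp; ring
            · by_cases hD : x = v' ∧ y = u₁
              · rw [if_neg hA, if_neg hB, if_neg hC, if_pos hD,
                  if_neg (fun h => h.elim hA hB), if_pos (Or.inr hD)]
                simp only [Finset.card_empty, Nat.cast_zero]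
                rw [hcdef]
                field_simp; ring
              · rw [if_neg hA, if_neg hB, if_neg hC, if_neg hD,
                  if_neg (fun h => h.elim hA hB), if_neg (fun h => h.elim hC hD)]
                simp only [Finset.card_empty, Nat.cast_zero]
                ring
      · -- Case B : P x = i, P y ∉ {i, j}
        have hyi : P y ≠ i := fun h => hPxy (hxi.trans h.symm)
        have hCe : ∀ (a b : V), P a = i → P b = j →
            (M.filter fun S => x ∈ insert a (insert b S) ∧ y ∈ insert a (insert b S))
              = if x = a then (M.filter fun S => y ∈ S) else ∅ := by
          intro a b ha hb
          by_cases hxa : x = a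
          · rw [if_pos hxa]
            apply Finset.filter_congr
            intro S hS
            rw [hclass_i x a b hxi ha hb S hS, hclass_o y a b hyi hyj ha hb S hS]
            simp [hxa]
          · rw [if_neg hxa]
            apply Finset.filter_false_of_mem
            intro S hS
            rw [hclass_i x a b hxi ha hb S hS, hclass_o y a b hyi hyj ha hb S hS]
            exact fun h => hxa h.1
        rw [hCe v u₁ hv hu₁, hCe v' u₂ hv' hu₂, hCe v u₂ hv hu₂, hCe v' u₁ hv' hu₁]
        have hnA : ¬(P x = i ∧ P y = j) := fun h => hyj h.2
        have hnB : ¬(P x = j ∧ P y = i) := fun h => hyi h.2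
        rw [if_neg (fun h => Or.elim h (hRHS0 hnA hnB v u₁ hv hu₁) (hRHS0 hnA hnB v' u₂ hv' hu₂)),
          if_neg (fun h => Or.elim h (hRHS0 hnA hnB v u₂ hv hu₂) (hRHS0 hnA hnB v' u₁ hv' hu₁))]
        by_cases hxv : x = v
        · have hxv' : ¬ x = v' := fun h => hvv' (hxv.symm.trans h)
          rw [if_pos hxv, if_neg hxv']
          ring
        · by_cases hxv' : x = v'
          · rw [if_neg hxv, if_pos hxv']
            ring
          · rw [if_neg hxv, if_neg hxv']
            ring
    · by_cases hxj : P x = j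
      · by_cases hyi : P y = i
        · -- Case C : P x = j, P y = i
          have hCe : ∀ (a b : V), P a = i → P b = j →
              (M.filter fun S => x ∈ insert a (insert b S) ∧ y ∈ insert a (insert b S))
                = if x = b ∧ y = a then M else ∅ := by
            intro a b ha hb
            by_cases hxy2 : x = b ∧ y = a
            · rw [if_pos hxy2]
              apply Finset.filter_true_of_mem
              intro S hS
              rw [hclass_j x a b hxj ha hb S hS, hclass_i y a b hyi ha hb S hS]
              exact hxy2
            · rw [if_neg hxy2]
              apply Finset.filter_false_of_mem
              intro S hS
              rw [hclass_j x a b hxj ha hb S hS, hclass_i y a b hyi ha hb S hS]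
              exact hxy2
          rw [hCe v u₁ hv hu₁, hCe v' u₂ hv' hu₂, hCe v u₂ hv hu₂, hCe v' u₁ hv' hu₁]
          have hs1 : (s(x,y) = s(v,u₁)) ↔ (x = u₁ ∧ y = v) := by
            constructor
            · intro h
              rcases hsym2 x y v u₁ hv hu₁ h with ⟨hxx,_,_,_⟩ | ⟨_,_,h3,h4⟩
              · exact absurd (hxx.symm.trans hxj) hij
              · exact ⟨h3,h4⟩
            · rintro ⟨rfl, rfl⟩; exact Sym2.eq_swap
          have hs2 : (s(x,y) = s(v',u₂)) ↔ (x = u₂ ∧ y = v') := by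
            constructor
            · intro h
              rcases hsym2 x y v' u₂ hv' hu₂ h with ⟨hxx,_,_,_⟩ | ⟨_,_,h3,h4⟩
              · exact absurd (hxx.symm.trans hxj) hij
              · exact ⟨h3,h4⟩
            · rintro ⟨rfl, rfl⟩; exact Sym2.eq_swap
          have hs3 : (s(x,y) = s(v,u₂)) ↔ (x = u₂ ∧ y = v) := by
            constructor
            · intro h
              rcases hsym2 x y v u₂ hv hu₂ h with ⟨hxx,_,_,_⟩ | ⟨_,_,h3,h4⟩
              · exact absurd (hxx.symm.trans hxj) hij
              · exact ⟨h3,h4⟩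
            · rintro ⟨rfl, rfl⟩; exact Sym2.eq_swap
          have hs4 : (s(x,y) = s(v',u₁)) ↔ (x = u₁ ∧ y = v') := by
            constructor
            · intro h
              rcases hsym2 x y v' u₁ hv' hu₁ h with ⟨hxx,_,_,_⟩ | ⟨_,_,h3,h4⟩
              · exact absurd (hxx.symm.trans hxj) hij
              · exact ⟨h3,h4⟩
            · rintro ⟨rfl, rfl⟩; exact Sym2.eq_swap
          simp only [hs1, hs2, hs3, hs4]
          by_cases hA : x = u₁ ∧ y = v
          · have hB : ¬(x = u₂ ∧ y = v') := fun h => hu12 (hA.1.symm.trans h.1)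
            have hC : ¬(x = u₂ ∧ y = v) := fun h => hu12 (hA.1.symm.trans h.1)
            have hD : ¬(x = u₁ ∧ y = v') := fun h => hvv' (hA.2.symm.trans h.2)
            rw [if_pos hA, if_neg hB, if_neg hC, if_neg hD,
              if_pos (Or.inl hA), if_neg (fun h => h.elim hC hD)]
            simp only [Finset.card_empty, Nat.cast_zero]
            rw [hcdef]
            field_simp; ring
          · by_cases hB : x = u₂ ∧ y = v'
            · have hC : ¬(x = u₂ ∧ y = v) := fun h => hvv' (h.2.symm.trans hB.2)
              have hD : ¬(x = u₁ ∧ y = v') := fun h => hu12 (h.1.symm.trans hB.1)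
              rw [if_neg hA, if_pos hB, if_neg hC, if_neg hD,
                if_pos (Or.inr hB), if_neg (fun h => h.elim hC hD)]
              simp only [Finset.card_empty, Nat.cast_zero]
              rw [hcdef]
              field_simp; ring
            · by_cases hC : x = u₂ ∧ y = v
              · have hD : ¬(x = u₁ ∧ y = v') := fun h => hu12 (h.1.symm.trans hC.1)
                rw [if_neg hA, if_neg hB, if_pos hC, if_neg hD,
                  if_neg (fun h => h.elim hA hB), if_pos (Or.inl hC)]
                simp only [Finset.card_empty, Nat.cast_zero]
                rw [hcdef]
                field_simp; ring
              · by_cases hD : x = u₁ ∧ y = v'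
                · rw [if_neg hA, if_neg hB, if_neg hC, if_pos hD,
                    if_neg (fun h => h.elim hA hB), if_pos (Or.inr hD)]
                  simp only [Finset.card_empty, Nat.cast_zero]
                  rw [hcdef]
                  field_simp; ring
                · rw [if_neg hA, if_neg hB, if_neg hC, if_neg hD,
                    if_neg (fun h => h.elim hA hB), if_neg (fun h => h.elim hC hD)]
                  simp only [Finset.card_empty, Nat.cast_zero]
                  ring
        · -- Case D : P x = j, P y ∉ {i, j}
          have hyj : P y ≠ j := fun h => hPxy (hxj.trans h.symm)
          have hCe : ∀ (a b : V), P a = i → P b = j →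
              (M.filter fun S => x ∈ insert a (insert b S) ∧ y ∈ insert a (insert b S))
                = if x = b then (M.filter fun S => y ∈ S) else ∅ := by
            intro a b ha hb
            by_cases hxb : x = b
            · rw [if_pos hxb]
              apply Finset.filter_congr
              intro S hS
              rw [hclass_j x a b hxj ha hb S hS, hclass_o y a b hyi hyj ha hb S hS]
              simp [hxb]
            · rw [if_neg hxb]
              apply Finset.filter_false_of_mem
              intro S hS
              rw [hclass_j x a b hxj ha hb S hS, hclass_o y a b hyi hyj ha hb S hS]
              exact fun h => hxb h.1
          rw [hCe v u₁ hv hu₁, hCe v' u₂ hv' hu₂, hCe v u₂ hv hu₂, hCe v' u₁ hv' hu₁]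
          have hnA : ¬(P x = i ∧ P y = j) := fun h => hyj h.2
          have hnB : ¬(P x = j ∧ P y = i) := fun h => hyi h.2
          rw [if_neg (fun h => Or.elim h (hRHS0 hnA hnB v u₁ hv hu₁) (hRHS0 hnA hnB v' u₂ hv' hu₂)),
            if_neg (fun h => Or.elim h (hRHS0 hnA hnB v u₂ hv hu₂) (hRHS0 hnA hnB v' u₁ hv' hu₁))]
          by_cases hxu1 : x = u₁
          · have hxu2 : ¬ x = u₂ := fun h => hu12 (hxu1.symm.trans h)
            rw [if_pos hxu1, if_neg hxu2]
            ring
          · by_cases hxu2 : x = u₂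
            · rw [if_neg hxu1, if_pos hxu2]
              ring
            · rw [if_neg hxu1, if_neg hxu2]
              ring
      · -- Case E : P x ∉ {i, j}
        have hnA : ¬(P x = i ∧ P y = j) := fun h => hxi h.1
        have hnB : ¬(P x = j ∧ P y = i) := fun h => hxj h.1
        rw [if_neg (fun h => Or.elim h (hRHS0 hnA hnB v u₁ hv hu₁) (hRHS0 hnA hnB v' u₂ hv' hu₂)),
          if_neg (fun h => Or.elim h (hRHS0 hnA hnB v u₂ hv hu₂) (hRHS0 hnA hnB v' u₁ hv' hu₁))]
        by_cases hyi : P y = i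
        · have hCe : ∀ (a b : V), P a = i → P b = j →
              (M.filter fun S => x ∈ insert a (insert b S) ∧ y ∈ insert a (insert b S))
                = if y = a then (M.filter fun S => x ∈ S) else ∅ := by
            intro a b ha hb
            by_cases hya : y = a
            · rw [if_pos hya]
              apply Finset.filter_congr
              intro S hS
              rw [hclass_o x a b hxi hxj ha hb S hS, hclass_i y a b hyi ha hb S hS]
              simp [hya]
            · rw [if_neg hya]
              apply Finset.filter_false_of_mem
              intro S hS
              rw [hclass_o x a b hxi hxj ha hb S hS, hclass_i y a b hyi ha hb S hS]
              exact fun h => hya h.2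
          rw [hCe v u₁ hv hu₁, hCe v' u₂ hv' hu₂, hCe v u₂ hv hu₂, hCe v' u₁ hv' hu₁]
          by_cases hyv : y = v
          · have hyv' : ¬ y = v' := fun h => hvv' (hyv.symm.trans h)
            rw [if_pos hyv, if_neg hyv']
            ring
          · by_cases hyv' : y = v'
            · rw [if_neg hyv, if_pos hyv']
              ring
            · rw [if_neg hyv, if_neg hyv']
              ring
        · by_cases hyj : P y = j
          · have hCe : ∀ (a b : V), P a = i → P b = j →
                (M.filter fun S => x ∈ insert a (insert b S) ∧ y ∈ insert a (insert b S))
                  = if y = b then (M.filter fun S => x ∈ S) else ∅ := by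
              intro a b ha hb
              by_cases hyb : y = b
              · rw [if_pos hyb]
                apply Finset.filter_congr
                intro S hS
                rw [hclass_o x a b hxi hxj ha hb S hS, hclass_j y a b hyj ha hb S hS]
                simp [hyb]
              · rw [if_neg hyb]
                apply Finset.filter_false_of_mem
                intro S hS
                rw [hclass_o x a b hxi hxj ha hb S hS, hclass_j y a b hyj ha hb S hS]
                exact fun h => hyb h.2
            rw [hCe v u₁ hv hu₁, hCe v' u₂ hv' hu₂, hCe v u₂ hv hu₂, hCe v' u₁ hv' hu₁]
            by_cases hyu1 : y = u₁
            · have hyu2 : ¬ y = u₂ := fun h => hu12 (hyu1.symm.trans h)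
              rw [if_pos hyu1, if_neg hyu2]
              ring
            · by_cases hyu2 : y = u₂
              · rw [if_neg hyu1, if_pos hyu2]
                ring
              · rw [if_neg hyu1, if_neg hyu2]
                ring
          · have hCe : ∀ (a b : V), P a = i → P b = j →
                (M.filter fun S => x ∈ insert a (insert b S) ∧ y ∈ insert a (insert b S))
                  = M.filter (fun S => x ∈ S ∧ y ∈ S) := by
              intro a b ha hb
              apply Finset.filter_congr
              intro S hS
              rw [hclass_o x a b hxi hxj ha hb S hS, hclass_o y a b hyi hyj ha hb S hS]
            rw [hCe v u₁ hv hu₁, hCe v' u₂ hv' hu₂, hCe v u₂ hv hu₂, hCe v' u₁ hv' hu₁]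
            ring
  · -- bound
    intro K hK
    have hcl : G.IsClique ↑K := (SimpleGraph.mem_cliqueFinset_iff.1 hK).1
    have hconf1 : ¬(v ∈ K ∧ v' ∈ K) := by
      rintro ⟨ha, hb⟩
      exact hpart v v' (hcl ha hb hvv') (hv.trans hv'.symm)
    have hconf2 : ¬(u₁ ∈ K ∧ u₂ ∈ K) := by
      rintro ⟨ha, hb⟩
      exact hpart u₁ u₂ (hcl ha hb hu12) (hu₁.trans hu₂.symm)
    have habs : |(if v ∈ K ∧ u₁ ∈ K ∧ (K.erase v).erase u₁ ∈ M then (1:ℝ) else 0)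
        + (if v' ∈ K ∧ u₂ ∈ K ∧ (K.erase v').erase u₂ ∈ M then (1:ℝ) else 0)
        - (if v ∈ K ∧ u₂ ∈ K ∧ (K.erase v).erase u₂ ∈ M then (1:ℝ) else 0)
        - (if v' ∈ K ∧ u₁ ∈ K ∧ (K.erase v').erase u₁ ∈ M then (1:ℝ) else 0)| ≤ 1 := by
      by_cases hA : v ∈ K ∧ u₁ ∈ K ∧ (K.erase v).erase u₁ ∈ M
      · have hB : ¬(v' ∈ K ∧ u₂ ∈ K ∧ (K.erase v').erase u₂ ∈ M) :=
          fun h => hconf1 ⟨hA.1, h.1⟩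
        have hC : ¬(v ∈ K ∧ u₂ ∈ K ∧ (K.erase v).erase u₂ ∈ M) :=
          fun h => hconf2 ⟨hA.2.1, h.2.1⟩
        have hD : ¬(v' ∈ K ∧ u₁ ∈ K ∧ (K.erase v').erase u₁ ∈ M) :=
          fun h => hconf1 ⟨hA.1, h.1⟩
        rw [if_pos hA, if_neg hB, if_neg hC, if_neg hD]
        norm_num
      · by_cases hB : v' ∈ K ∧ u₂ ∈ K ∧ (K.erase v').erase u₂ ∈ M
        · have hC : ¬(v ∈ K ∧ u₂ ∈ K ∧ (K.erase v).erase u₂ ∈ M) :=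
            fun h => hconf1 ⟨h.1, hB.1⟩
          have hD : ¬(v' ∈ K ∧ u₁ ∈ K ∧ (K.erase v').erase u₁ ∈ M) :=
            fun h => hconf2 ⟨h.2.1, hB.2.1⟩
          rw [if_neg hA, if_pos hB, if_neg hC, if_neg hD]
          norm_num
        · by_cases hC : v ∈ K ∧ u₂ ∈ K ∧ (K.erase v).erase u₂ ∈ M
          · have hD : ¬(v' ∈ K ∧ u₁ ∈ K ∧ (K.erase v').erase u₁ ∈ M) :=
              fun h => hconf1 ⟨hC.1, h.1⟩
            rw [if_neg hA, if_neg hB, if_pos hC, if_neg hD]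
            norm_num
          · by_cases hD : v' ∈ K ∧ u₁ ∈ K ∧ (K.erase v').erase u₁ ∈ M
            · rw [if_neg hA, if_neg hB, if_neg hC, if_pos hD]
              norm_num
            · rw [if_neg hA, if_neg hB, if_neg hC, if_neg hD]
              norm_num
    calc |c * ((if v ∈ K ∧ u₁ ∈ K ∧ (K.erase v).erase u₁ ∈ M then (1:ℝ) else 0)
        + (if v' ∈ K ∧ u₂ ∈ K ∧ (K.erase v').erase u₂ ∈ M then (1:ℝ) else 0)
        - (if v ∈ K ∧ u₂ ∈ K ∧ (K.erase v).erase u₂ ∈ M then (1:ℝ) else 0)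
        - (if v' ∈ K ∧ u₁ ∈ K ∧ (K.erase v').erase u₁ ∈ M then (1:ℝ) else 0))|
        = |c| * |_| := abs_mul _ _
      _ ≤ c * 1 := by
          rw [abs_of_pos hcpos]
          exact mul_le_mul_of_nonneg_left habs (le_of_lt hcpos)
      _ = c := mul_one c
      _ ≤ 2 * (n : ℝ) ^ 2 / ((G.cliqueFinset r).card : ℝ) := by
          rw [hcdef, div_le_div_iff₀ hMpos hkpos]
          calc (1:ℝ) * (G.cliqueFinset r).card = ((G.cliqueFinset r).card : ℝ) := one_mul _
            _ ≤ 2 * (n:ℝ)^2 * M.card := hk2
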